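/- For any Hermitian matrix ρ ∈ ℂ^(N×N) and K ≤ N, if P is the orthogonal projector onto the span of eigenvectors of ρ corresponding to K eigenvalues of largest absolute value, then ‖ρ − PρP‖²_HS equals the sum of squares of the remaining N−K eigenvalues of ρ; i.e., the lower bound of the Eckart–Young-type inequality for Hermitian matrices is attained by M = PρP. -/

import Mathlib

open Matrix BigOperators

noncomputable def hsNormSq {N : ℕ} (A : Matrix (Fin N) (Fin N) ℂ) : ℝ :=
  ∑ i, ∑ j, ‖A i j‖ ^ 2

lemma hsNormSq_trace {N : ℕ} (A : Matrix (Fin N) (Fin N) ℂ) :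
    hsNormSq A = (Matrix.trace (Aᴴ * A)).re := by
  simp only [hsNormSq, Matrix.trace, Matrix.diag, Matrix.mul_apply, Matrix.conjTranspose_apply]
  rw [Complex.re_sum]
  rw [Finset.sum_comm]
  refine Finset.sum_congr rfl fun i _ => ?_
  rw [Complex.re_sum]
  refine Finset.sum_congr rfl fun j _ => ?_
  rw [Complex.sq_norm]
  simp [Complex.normSq_apply, Complex.mul_re, Complex.star_def]

lemma hsNormSq_conj {N : ℕ} (V A : Matrix (Fin N) (Fin N) ℂ)
    (hV : V ∈ Matrix.unitaryGroup (Fin N) ℂ) :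
    hsNormSq (V * A * Vᴴ) = hsNormSq A := by
  have h1 : Vᴴ * V = 1 := Matrix.UnitaryGroup.star_mul_self ⟨V, hV⟩
  have h2 : V * Vᴴ = 1 := by
    have := Matrix.mem_unitaryGroup_iff.mp hV
    simpa [Matrix.star_eq_conjTranspose] using this
  rw [hsNormSq_trace, hsNormSq_trace]
  congr 1
  have : (V * A * Vᴴ)ᴴ * (V * A * Vᴴ) = V * (Aᴴ * A) * Vᴴ := by
    simp only [Matrix.conjTranspose_mul, Matrix.conjTranspose_conjTranspose,
      Matrix.mul_assoc]
    rw [show Vᴴ * (V * (A * Vᴴ)) = A * Vᴴ by rw [← Matrix.mul_assoc, h1, Matrix.one_mul]]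
  rw [this, Matrix.trace_mul_cycle, ← Matrix.mul_assoc, h1, Matrix.one_mul]

/-- The Eckart–Young-type lower bound for Hermitian matrices is attained by `M = P ρ P`,
where `P` is the orthogonal projector onto the span of eigenvectors corresponding to the
`K` eigenvalues of largest absolute value. -/
theorem stmt1 {N K : ℕ} (ρ : Matrix (Fin N) (Fin N) ℂ)
    (hρ : ρ.IsHermitian)
    (lam : Fin N → ℝ) (V : Matrix (Fin N) (Fin N) ℂ)
    (hV : V ∈ Matrix.unitaryGroup (Fin N) ℂ)
    (hdiag : ρ = V * Matrix.diagonal (fun i => (lam i : ℂ)) * Vᴴ)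
    (hord : ∀ i j : Fin N, i ≤ j → |lam j| ≤ |lam i|)
    (P : Matrix (Fin N) (Fin N) ℂ)
    (hP : P = V * Matrix.diagonal (fun i : Fin N => if (i : ℕ) < K then (1 : ℂ) else 0) * Vᴴ) :
    hsNormSq (ρ - P * ρ * P)
      = ∑ i ∈ Finset.univ.filter (fun i : Fin N => K ≤ (i : ℕ)), (lam i) ^ 2 := by
  have h1 : Vᴴ * V = 1 := Matrix.UnitaryGroup.star_mul_self ⟨V, hV⟩
  set D := Matrix.diagonal (fun i => (lam i : ℂ))
  set E := Matrix.diagonal (fun i : Fin N => if (i : ℕ) < K then (1 : ℂ) else 0)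
  have key : ρ - P * ρ * P = V * (D - E * D * E) * Vᴴ := by
    rw [hdiag, hP]
    rw [Matrix.mul_sub, Matrix.sub_mul]
    congr 1
    calc V * E * Vᴴ * (V * D * Vᴴ) * (V * E * Vᴴ)
        = V * (E * ((Vᴴ * V) * (D * ((Vᴴ * V) * (E * Vᴴ))))) := by
          simp only [Matrix.mul_assoc]
      _ = V * (E * D * E) * Vᴴ := by rw [h1]; simp [Matrix.mul_assoc]
  rw [key, hsNormSq_conj _ _ hV]
  have hdd : D - E * D * E = Matrix.diagonal
      (fun i : Fin N => if (i : ℕ) < K then (0:ℂ) else (lam i : ℂ)) := by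
    simp only [D, E, Matrix.diagonal_mul_diagonal, ← Matrix.diagonal_sub]
    ext i j
    rcases eq_or_ne i j with rfl | h
    · by_cases hk : (i : ℕ) < K <;> simp [Matrix.diagonal_apply_eq, hk]
    · simp [Matrix.diagonal_apply_ne _ h]
  rw [hdd]
  simp only [hsNormSq, Matrix.diagonal_apply]
  rw [Finset.sum_comm]
  rw [Finset.sum_congr rfl (fun j _ => Finset.sum_eq_single j
    (fun i _ hij => by simp [hij]) (by simp))]
  simp only [if_true, eq_self_iff_true]
  rw [← Finset.sum_filter_add_sum_filter_not Finset.univ (fun i : Fin N => K ≤ (i : ℕ))]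
  have hA : ∑ i ∈ Finset.univ.filter (fun i : Fin N => K ≤ (i : ℕ)),
      ‖(if (i : ℕ) < K then (0 : ℂ) else (lam i : ℂ))‖ ^ 2
      = ∑ i ∈ Finset.univ.filter (fun i : Fin N => K ≤ (i : ℕ)), (lam i) ^ 2 :=
    Finset.sum_congr rfl fun i hi => by
      have h : ¬ (i : ℕ) < K := not_lt.mpr (Finset.mem_filter.mp hi).2
      simp [h, Complex.norm_real, sq_abs]
  have hB : ∑ i ∈ Finset.univ.filter (fun i : Fin N => ¬ K ≤ (i : ℕ)),
      ‖(if (i : ℕ) < K then (0 : ℂ) else (lam i : ℂ))‖ ^ 2 = 0 :=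
    Finset.sum_eq_zero fun i hi => by
      have h : (i : ℕ) < K := by
        simpa using (Finset.mem_filter.mp hi).2
      simp [h]
  rw [hA, hB, add_zero]
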